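/- Let Ω be a metric space with a finite Borel measure σ, σ(Ω) > 0; let F be a finite-dimensional vector space of real-valued square-integrable functions on Ω containing the constant functions, on which the L²(σ) inner product is positive definite, and let G be the linear span of the products φ₁·φ₂ with φ₁,φ₂ ∈ F. Assume Condition (M): the reproducing kernel Φ of F satisfies Φ(ω,ω') = S(d(ω,ω')) for all ω,ω' ∈ Ω, for some function S : [0,∞) → ℝ. If X ⊆ Ω is a finite subset with |X| = dim_ℝ F such that X with the uniform weight W(x) = σ(Ω)/|X| is a cubature formula for G (a tight geometrical design), then S(d(x,y)) = 0 for all x,y ∈ X with x ≠ y. -/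

import Mathlib

open MeasureTheory Finset

/-- for a tight geometrical design `X` (uniform weight, `|X| = dim F`) on a
metric measure space satisfying Condition (M) — the reproducing kernel `Φ` of `F` is a
function `S` of the distance — all distances between distinct points of `X` are zeros
of `S`. -/
theorem tight_design_distances_are_zeros_of_kernel
    {Ω : Type*} [MetricSpace Ω] [MeasurableSpace Ω] [BorelSpace Ω]
    (σ : Measure Ω) [IsFiniteMeasure σ] (hσ : 0 < σ Set.univ)
    (F G : Submodule ℝ (Ω → ℝ)) [FiniteDimensional ℝ F]
    (hL2 : ∀ φ ∈ F, MemLp φ 2 σ)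
    (hconst : ∀ c : ℝ, (fun _ : Ω => c) ∈ F)
    (hpd : ∀ φ ∈ F, (∀ᵐ ω ∂σ, φ ω = 0) → φ = 0)
    (hG : G = Submodule.span ℝ {f : Ω → ℝ | ∃ φ₁ ∈ F, ∃ φ₂ ∈ F, f = φ₁ * φ₂})
    (Φ : Ω → Ω → ℝ)
    (hΦmem : ∀ ω : Ω, (fun ω' => Φ ω' ω) ∈ F)
    (hΦrepr : ∀ φ ∈ F, ∀ ω : Ω, ∫ x, φ x * Φ x ω ∂σ = φ ω)
    (S : ℝ → ℝ)
    (hCondM : ∀ ω ω' : Ω, Φ ω ω' = S (dist ω ω'))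
    (X : Finset Ω)
    (htight : X.card = Module.finrank ℝ F)
    (hcub : ∀ φ ∈ G,
      ∑ x ∈ X, ((σ Set.univ).toReal / X.card) * φ x = ∫ ω, φ ω ∂σ) :
    ∀ x ∈ X, ∀ y ∈ X, x ≠ y → S (dist x y) = 0 := by
  classical
  intro x hx y hy hxy
  subst hG
  have hmulG : ∀ φ₁ ∈ F, ∀ φ₂ ∈ F, φ₁ * φ₂ ∈
      Submodule.span ℝ {f : Ω → ℝ | ∃ φ₁ ∈ F, ∃ φ₂ ∈ F, f = φ₁ * φ₂} :=
    fun φ₁ h1 φ₂ h2 => Submodule.subset_span ⟨φ₁, h1, φ₂, h2, rfl⟩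
  let E : F →ₗ[ℝ] (↥X → ℝ) :=
    { toFun := fun φ z => (φ : Ω → ℝ) z
      map_add' := fun a b => rfl
      map_smul' := fun c a => rfl }
  have hEinj : Function.Injective E := by
    rw [injective_iff_map_eq_zero]
    intro φ hφ
    have hvanish : ∀ z ∈ X, (φ : Ω → ℝ) z = 0 := fun z hz => congrFun hφ ⟨z, hz⟩
    have hsq : ∫ ω, ((φ : Ω → ℝ) * (φ : Ω → ℝ)) ω ∂σ = 0 := by
      rw [← hcub _ (hmulG _ φ.2 _ φ.2)]
      apply Finset.sum_eq_zero
      intro z hz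
      simp [hvanish z hz]
    have hint : Integrable ((φ : Ω → ℝ) * (φ : Ω → ℝ)) σ := by
      have := (hL2 _ φ.2).integrable_sq
      simpa [sq, Pi.mul_def] using this
    have hnn : 0 ≤ᵐ[σ] ((φ : Ω → ℝ) * (φ : Ω → ℝ)) :=
      Filter.Eventually.of_forall fun ω => mul_self_nonneg _
    have h0 := (integral_eq_zero_iff_of_nonneg_ae hnn hint).mp hsq
    have hae : ∀ᵐ ω ∂σ, (φ : Ω → ℝ) ω = 0 := by
      filter_upwards [h0] with ω hω
      exact mul_self_eq_zero.mp hω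
    exact Subtype.ext (hpd _ φ.2 hae)
  have hfin : Module.finrank ℝ (↥X → ℝ) = X.card := by
    simp [Module.finrank_pi, Fintype.card_coe]
  have hEsurj : Function.Surjective E := by
    have h1 : Module.finrank ℝ F = Module.finrank ℝ (↥X → ℝ) := by rw [hfin, htight]
    exact (LinearMap.injective_iff_surjective_of_finrank_eq_finrank h1).mp hEinj
  obtain ⟨φ, hφ⟩ := hEsurj (fun z => if (z : Ω) = y then 1 else 0)
  have hφy : (φ : Ω → ℝ) y = 1 := by
    have := congrFun hφ ⟨y, hy⟩; simpa [E] using this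
  have hφz : ∀ z ∈ X, z ≠ y → (φ : Ω → ℝ) z = 0 := by
    intro z hz hzy
    have := congrFun hφ ⟨z, hz⟩
    simpa [hzy, E] using this
  have hint : ∑ z ∈ X, ((σ Set.univ).toReal / X.card) * ((φ : Ω → ℝ) z * Φ z x)
      = (φ : Ω → ℝ) x := by
    have h := hcub _ (hmulG _ φ.2 _ (hΦmem x))
    simp only [Pi.mul_apply] at h
    rw [h]
    exact hΦrepr _ φ.2 x
  have hsum : ∑ z ∈ X, ((σ Set.univ).toReal / X.card) * ((φ : Ω → ℝ) z * Φ z x)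
      = ((σ Set.univ).toReal / X.card) * Φ y x := by
    rw [Finset.sum_eq_single y]
    · rw [hφy, one_mul]
    · intro z hz hzy; rw [hφz z hz hzy]; ring
    · intro h; exact absurd hy h
  have hφx : (φ : Ω → ℝ) x = 0 := hφz x hx hxy
  have hWpos : 0 < (σ Set.univ).toReal / X.card := by
    apply div_pos
    · exact ENNReal.toReal_pos hσ.ne' (measure_ne_top σ _)
    · exact_mod_cast Finset.card_pos.mpr ⟨x, hx⟩
  have hz : ((σ Set.univ).toReal / X.card) * Φ y x = 0 := by
    rw [← hsum, hint, hφx]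
  have hΦ0 : Φ y x = 0 := by
    rcases mul_eq_zero.mp hz with h | h
    · exact absurd h hWpos.ne'
    · exact h
  rw [dist_comm, ← hCondM]
  exact hΦ0
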